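/- arXiv:1111.0194 — 3 statements merged into one kernel-verified Lean document; each statement's English description precedes it below -/
import Mathlib

section
/- Under the setup of the absolute-error single-step lemma, with x* a minimizer of f and any h ≥ 0: E_u[f(x₊) − f(x*)] ≤ (1 − h/n)(f(x) − f(x*)) + (L₁h²/(2n))‖x* − x‖² + L₁μ²/2. -/
open MeasureTheory ProbabilityTheory
open scoped RealInnerProductSpace

variable {n : ℕ}

lemma rp_int_cross (μs : Measure (EuclideanSpace ℝ (Fin n))) [IsProbabilityMeasure μs]
    (hsphere : ∀ᵐ u ∂μs, ‖u‖ = 1) (a b : EuclideanSpace ℝ (Fin n)) :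
    Integrable (fun u => ⟪a, u⟫ * ⟪b, u⟫) μs := by
  refine Integrable.mono' (integrable_const (‖a‖ * ‖b‖)) ?_ ?_
  · exact ((continuous_const.inner continuous_id).mul
      (continuous_const.inner continuous_id)).aestronglyMeasurable
  · filter_upwards [hsphere] with u hu
    rw [Real.norm_eq_abs, abs_mul]
    calc |⟪a, u⟫| * |⟪b, u⟫| ≤ (‖a‖ * ‖u‖) * (‖b‖ * ‖u‖) :=
          mul_le_mul (abs_real_inner_le_norm a u) (abs_real_inner_le_norm b u)
            (abs_nonneg _) (by positivity)
      _ = ‖a‖ * ‖b‖ := by rw [hu]; ring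

lemma rp_sq_eq (μs : Measure (EuclideanSpace ℝ (Fin n))) [IsProbabilityMeasure μs]
    (hinv : ∀ e : EuclideanSpace ℝ (Fin n) ≃ₗᵢ[ℝ] EuclideanSpace ℝ (Fin n), μs.map e = μs)
    (a b : EuclideanSpace ℝ (Fin n)) (hab : ‖a‖ = ‖b‖) :
    ∫ u, ⟪a, u⟫ ^ 2 ∂μs = ∫ u, ⟪b, u⟫ ^ 2 ∂μs := by
  set e : EuclideanSpace ℝ (Fin n) ≃ₗᵢ[ℝ] EuclideanSpace ℝ (Fin n) :=
    Submodule.reflection (ℝ ∙ (a - b))ᗮ with he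
  have hea : e a = b := Submodule.reflection_sub hab
  calc ∫ u, ⟪a, u⟫ ^ 2 ∂μs = ∫ u, ⟪e a, e u⟫ ^ 2 ∂μs := by
        simp [e.inner_map_map]
    _ = ∫ u, ⟪b, u⟫ ^ 2 ∂(μs.map e) := by
        rw [integral_map (e.continuous.measurable.aemeasurable)
          ((continuous_const.inner continuous_id).pow 2).aestronglyMeasurable]
        simp [hea]
    _ = ∫ u, ⟪b, u⟫ ^ 2 ∂μs := by rw [hinv e]

lemma rp_sq_val (hn : 0 < n) (μs : Measure (EuclideanSpace ℝ (Fin n))) [IsProbabilityMeasure μs]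
    (hsphere : ∀ᵐ u ∂μs, ‖u‖ = 1)
    (hinv : ∀ e : EuclideanSpace ℝ (Fin n) ≃ₗᵢ[ℝ] EuclideanSpace ℝ (Fin n), μs.map e = μs)
    (a : EuclideanSpace ℝ (Fin n)) :
    ∫ u, ⟪a, u⟫ ^ 2 ∂μs = ‖a‖ ^ 2 / n := by
  have hN : (0 : ℝ) < n := by exact_mod_cast hn
  set e₀ : EuclideanSpace ℝ (Fin n) := EuclideanSpace.single ⟨0, hn⟩ (1 : ℝ) with he₀
  have hne₀ : ‖e₀‖ = 1 := by simp [he₀]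
  set c : ℝ := ∫ u, ⟪e₀, u⟫ ^ 2 ∂μs with hc
  have hunit : ∀ b : EuclideanSpace ℝ (Fin n), ‖b‖ = 1 → ∫ u, ⟪b, u⟫ ^ 2 ∂μs = c :=
    fun b hb => rp_sq_eq μs hinv b e₀ (by rw [hb, hne₀])
  have hint : ∀ b : EuclideanSpace ℝ (Fin n), Integrable (fun u => ⟪b, u⟫ ^ 2) μs := by
    intro b
    have := rp_int_cross μs hsphere b b
    simpa [sq] using this
  have hsum : (n : ℝ) * c = 1 := by
    have h1 : ∑ i : Fin n, ∫ u, ⟪(EuclideanSpace.single i (1:ℝ) :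
        EuclideanSpace ℝ (Fin n)), u⟫ ^ 2 ∂μs = 1 := by
      have hae : (fun u => ∑ i : Fin n, ⟪(EuclideanSpace.single i (1:ℝ) :
          EuclideanSpace ℝ (Fin n)), u⟫ ^ 2) =ᵐ[μs] fun _ => (1:ℝ) := by
        filter_upwards [hsphere] with u hu
        have : ∑ i : Fin n, ⟪(EuclideanSpace.single i (1:ℝ) :
            EuclideanSpace ℝ (Fin n)), u⟫ ^ 2 = ⟪u, u⟫ := by
          rw [PiLp.inner_apply]
          refine Finset.sum_congr rfl fun i _ => ?_
          rw [EuclideanSpace.inner_single_left]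
          simp [sq]
        rw [this, real_inner_self_eq_norm_sq, hu, one_pow]
      rw [← integral_finset_sum _ (fun i _ => hint _), integral_congr_ae hae]
      simp
    rw [Finset.sum_congr rfl (fun i _ => hunit _ (by simp))] at h1
    simpa [Finset.sum_const, nsmul_eq_mul] using h1
  have hcval : c = 1 / n := by field_simp at hsum ⊢; linarith
  rcases eq_or_ne a 0 with rfl | ha
  · simp
  · set b : EuclideanSpace ℝ (Fin n) := ‖a‖⁻¹ • a with hb
    have hnb : ‖b‖ = 1 := norm_smul_inv_norm ha
    have h2 : ∀ u : EuclideanSpace ℝ (Fin n), ⟪a, u⟫ = ‖a‖ * ⟪b, u⟫ := by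
      intro u
      rw [hb, real_inner_smul_left, mul_inv_cancel_left₀ (norm_ne_zero_iff.mpr ha)]
    calc ∫ u, ⟪a, u⟫ ^ 2 ∂μs = ∫ u, ‖a‖ ^ 2 * ⟪b, u⟫ ^ 2 ∂μs := by
          refine integral_congr_ae (Filter.Eventually.of_forall fun u => ?_)
          simp only [h2]; ring
      _ = ‖a‖ ^ 2 * c := by rw [integral_const_mul, hunit b hnb]
      _ = ‖a‖ ^ 2 / n := by rw [hcval]; ring

lemma rp_cross_val (hn : 0 < n) (μs : Measure (EuclideanSpace ℝ (Fin n))) [IsProbabilityMeasure μs]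
    (hsphere : ∀ᵐ u ∂μs, ‖u‖ = 1)
    (hinv : ∀ e : EuclideanSpace ℝ (Fin n) ≃ₗᵢ[ℝ] EuclideanSpace ℝ (Fin n), μs.map e = μs)
    (a b : EuclideanSpace ℝ (Fin n)) :
    ∫ u, ⟪a, u⟫ * ⟪b, u⟫ ∂μs = ⟪a, b⟫ / n := by
  have hN : (0 : ℝ) < n := by exact_mod_cast hn
  have hint : ∀ v : EuclideanSpace ℝ (Fin n), Integrable (fun u => ⟪v, u⟫ ^ 2) μs := by
    intro v
    simpa [sq] using rp_int_cross μs hsphere v v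
  have hpol : ∀ u, ⟪a, u⟫ * ⟪b, u⟫ = (⟪a + b, u⟫ ^ 2 - ⟪a - b, u⟫ ^ 2) / 4 := by
    intro u
    rw [inner_add_left, inner_sub_left]
    ring
  calc ∫ u, ⟪a, u⟫ * ⟪b, u⟫ ∂μs
      = ∫ u, (⟪a + b, u⟫ ^ 2 - ⟪a - b, u⟫ ^ 2) / 4 ∂μs :=
        integral_congr_ae (Filter.Eventually.of_forall fun u => hpol u)
    _ = ((∫ u, ⟪a + b, u⟫ ^ 2 ∂μs) - ∫ u, ⟪a - b, u⟫ ^ 2 ∂μs) / 4 := by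
        rw [integral_div, integral_sub (hint _) (hint _)]
    _ = (‖a + b‖ ^ 2 - ‖a - b‖ ^ 2) / 4 / n := by
        rw [rp_sq_val hn μs hsphere hinv, rp_sq_val hn μs hsphere hinv]
        ring
    _ = ⟪a, b⟫ / n := by
        rw [@norm_add_sq_real, @norm_sub_sq_real]
        ring


set_option maxHeartbeats 1000000 in
/-- Absolute-error single-step lemma with z = x*: for any h ≥ 0,
E_u[f(x₊) − f(x*)] ≤ (1 − h/n)(f(x) − f(x*)) + (L₁h²/(2n))‖x* − x‖² + L₁μ²/2. -/
theorem rp_single_step_opt (n : ℕ) (hn : 0 < n)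
    (f : EuclideanSpace ℝ (Fin n) → ℝ)
    (f' : EuclideanSpace ℝ (Fin n) → EuclideanSpace ℝ (Fin n)) (L₁ : ℝ)
    (hdiff : ∀ x, HasGradientAt f (f' x) x)
    (hconv : ∀ x y, f x + ⟪f' x, y - x⟫ ≤ f y)
    (hquad : ∀ x y, f y - f x - ⟪f' x, y - x⟫ ≤ L₁ / 2 * ‖y - x‖ ^ 2)
    (μs : Measure (EuclideanSpace ℝ (Fin n))) [IsProbabilityMeasure μs]
    (hsphere : ∀ᵐ u ∂μs, ‖u‖ = 1)
    (hinv : ∀ e : EuclideanSpace ℝ (Fin n) ≃ₗᵢ[ℝ] EuclideanSpace ℝ (Fin n), μs.map e = μs)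
    (x : EuclideanSpace ℝ (Fin n)) (μ : ℝ) (hμ : 0 ≤ μ)
    (xstar : EuclideanSpace ℝ (Fin n)) (hmin : ∀ y, f xstar ≤ f y)
    (hstar htilde : EuclideanSpace ℝ (Fin n) → ℝ)
    (hls : ∀ u, ∀ t : ℝ, f (x + hstar u • u) ≤ f (x + t • u))
    (happ : ∀ u, |htilde u - hstar u| ≤ μ)
    (h : ℝ) (hh : 0 ≤ h) :
    ∫ u, (f (x + htilde u • u) - f xstar) ∂μs ≤
      (1 - h / n) * (f x - f xstar) + L₁ * h ^ 2 / (2 * n) * ‖xstar - x‖ ^ 2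
        + L₁ * μ ^ 2 / 2 := by
  have hN : (0 : ℝ) < n := by exact_mod_cast hn
  set g : EuclideanSpace ℝ (Fin n) := xstar - x with hg
  set b : EuclideanSpace ℝ (Fin n) := f' x with hbb
  -- L₁ ≥ 0
  have hL : 0 ≤ L₁ := by
    set y : EuclideanSpace ℝ (Fin n) := x + EuclideanSpace.single ⟨0, hn⟩ (1:ℝ) with hy
    have h1 := hconv x y
    have h2 := hquad x y
    have h3 : ‖y - x‖ = 1 := by rw [hy, add_sub_cancel_left]; simp
    rw [h3, one_pow] at h2
    linarith
  -- gradient vanishes at the minimizer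
  have hgrad0 : f' xstar = 0 := by
    have hlm : IsLocalMin f xstar := Filter.Eventually.of_forall hmin
    have := hlm.hasFDerivAt_eq_zero (hdiff xstar).hasFDerivAt
    exact (InnerProductSpace.toDual ℝ _).map_eq_zero_iff.mp this
  have hDub : f x - f xstar ≤ L₁ / 2 * ‖xstar - x‖ ^ 2 := by
    have := hquad xstar x
    rw [hgrad0, inner_zero_left, norm_sub_rev] at this
    linarith
  have hD : 0 ≤ f x - f xstar := by linarith [hmin x]
  -- pointwise key inequality on the sphere
  have key : ∀ u : EuclideanSpace ℝ (Fin n), ‖u‖ = 1 →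
      f (x + htilde u • u) - f xstar ≤
        (f x - f xstar + L₁ * μ ^ 2 / 2) + h * (⟪g, u⟫ * ⟪b, u⟫)
          + (L₁ * h ^ 2 / 2) * (⟪g, u⟫ * ⟪g, u⟫) := by
    intro u hu
    set p : EuclideanSpace ℝ (Fin n) := x + hstar u • u with hp
    -- directional derivative at the line-search minimum is zero
    have hderiv : HasDerivAt (fun t : ℝ => f (x + t • u)) ⟪f' p, u⟫ (hstar u) := by
      have h1 : HasDerivAt (fun t : ℝ => x + t • u) u (hstar u) := by
        simpa using ((hasDerivAt_id (hstar u)).smul_const u).const_add x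
      have := (hdiff p).hasFDerivAt.comp_hasDerivAt (hstar u) h1
      simp [InnerProductSpace.toDual_apply_apply] at this
      exact this
    have hlm : IsLocalMin (fun t : ℝ => f (x + t • u)) (hstar u) :=
      Filter.Eventually.of_forall fun t => hls u t
    have hz : ⟪f' p, u⟫ = 0 := hlm.hasDerivAt_eq_zero hderiv
    -- step 1 : absolute error costs at most L₁ μ²/2
    have step1 : f (x + htilde u • u) ≤ f p + L₁ * μ ^ 2 / 2 := by
      have hq := hquad p (x + htilde u • u)
      have hdiffpt : (x + htilde u • u) - p = (htilde u - hstar u) • u := by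
        rw [hp, sub_smul]; abel
      rw [hdiffpt, real_inner_smul_right, hz, mul_zero, norm_smul, hu,
        Real.norm_eq_abs, mul_one] at hq
      have habs : |htilde u - hstar u| ^ 2 ≤ μ ^ 2 :=
        pow_le_pow_left₀ (abs_nonneg _) (happ u) 2
      have hmul : L₁ / 2 * |htilde u - hstar u| ^ 2 ≤ L₁ / 2 * μ ^ 2 :=
        mul_le_mul_of_nonneg_left habs (by linarith)
      linarith
    -- step 2 : line search beats the step h⟪g,u⟫
    have step2 : f p ≤ f x + (h * ⟪g, u⟫) * ⟪b, u⟫ + L₁ / 2 * (h * ⟪g, u⟫) ^ 2 := by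
      have h1 := hls u (h * ⟪g, u⟫)
      have h2 := hquad x (x + (h * ⟪g, u⟫) • u)
      rw [add_sub_cancel_left, real_inner_smul_right, norm_smul, hu,
        Real.norm_eq_abs, mul_one, sq_abs] at h2
      rw [← hbb] at h2
      linarith
    have e1 : L₁ / 2 * (h * ⟪g, u⟫) ^ 2 = (L₁ * h ^ 2 / 2) * (⟪g, u⟫ * ⟪g, u⟫) := by ring
    have e2 : (h * ⟪g, u⟫) * ⟪b, u⟫ = h * (⟪g, u⟫ * ⟪b, u⟫) := by ring
    linarith
  -- integrability of the majorant
  have hF₁ : Integrable (fun u => ⟪g, u⟫ * ⟪b, u⟫) μs := rp_int_cross μs hsphere g b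
  have hF₂ : Integrable (fun u => ⟪g, u⟫ * ⟪g, u⟫) μs := rp_int_cross μs hsphere g g
  set C : ℝ := f x - f xstar + L₁ * μ ^ 2 / 2 with hC
  have hφint : Integrable (fun u => C + h * (⟪g, u⟫ * ⟪b, u⟫)
      + (L₁ * h ^ 2 / 2) * (⟪g, u⟫ * ⟪g, u⟫)) μs :=
    ((integrable_const C).add (hF₁.const_mul h)).add (hF₂.const_mul _)
  -- the RHS is nonnegative (needed if the LHS integrand fails to be integrable)
  have hRHS : 0 ≤ (1 - h / n) * (f x - f xstar) + L₁ * h ^ 2 / (2 * n) * ‖xstar - x‖ ^ 2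
      + L₁ * μ ^ 2 / 2 := by
    set D := f x - f xstar
    set R := ‖xstar - x‖ ^ 2 with hR
    have hRpos : 0 ≤ R := sq_nonneg _
    rcases le_or_gt h n with hcase | hcase
    · have h1 : 0 ≤ 1 - h / n := by
        rw [sub_nonneg]
        exact div_le_one_of_le₀ hcase hN.le
      have h2 : 0 ≤ L₁ * h ^ 2 / (2 * n) * R := by positivity
      have h3 : 0 ≤ L₁ * μ ^ 2 / 2 := by positivity
      have := mul_nonneg h1 hD
      linarith
    · have h1 : 1 - h / n ≤ 0 := by
        rw [sub_nonpos]
        exact (one_le_div hN).mpr hcase.le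
      have h2 : (1 - h / n) * D ≥ (1 - h / n) * (L₁ / 2 * R) := by
        exact mul_le_mul_of_nonpos_left hDub h1
      have hN1 : (1 : ℝ) ≤ n := by exact_mod_cast hn
      have h4 : 0 ≤ (n : ℝ) - h + h ^ 2 := by nlinarith [sq_nonneg (h - 1/2)]
      have h5 : (1 - h / n) * (L₁ / 2 * R) + L₁ * h ^ 2 / (2 * n) * R
          = L₁ * R * ((n : ℝ) - h + h ^ 2) / (2 * n) := by
        field_simp
      have h6 : 0 ≤ L₁ * R * ((n : ℝ) - h + h ^ 2) / (2 * n) := by positivity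
      have h3 : 0 ≤ L₁ * μ ^ 2 / 2 := by positivity
      linarith
  by_cases hF : Integrable (fun u => f (x + htilde u • u) - f xstar) μs
  · have hmono : ∫ u, (f (x + htilde u • u) - f xstar) ∂μs ≤
        ∫ u, (C + h * (⟪g, u⟫ * ⟪b, u⟫) + (L₁ * h ^ 2 / 2) * (⟪g, u⟫ * ⟪g, u⟫)) ∂μs := by
      refine integral_mono_ae hF hφint ?_
      filter_upwards [hsphere] with u hu
      exact key u hu
    have hval : ∫ u, (C + h * (⟪g, u⟫ * ⟪b, u⟫)
        + (L₁ * h ^ 2 / 2) * (⟪g, u⟫ * ⟪g, u⟫)) ∂μs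
        = C + h * (⟪g, b⟫ / n) + (L₁ * h ^ 2 / 2) * (‖g‖ ^ 2 / n) := by
      have hA : Integrable (fun u => C + h * (⟪g, u⟫ * ⟪b, u⟫)) μs :=
        (integrable_const C).add (hF₁.const_mul h)
      rw [integral_add hA (hF₂.const_mul (L₁ * h ^ 2 / 2)),
        integral_add (integrable_const C) (hF₁.const_mul h),
        integral_const, integral_const_mul, integral_const_mul,
        rp_cross_val hn μs hsphere hinv, rp_cross_val hn μs hsphere hinv,
        real_inner_self_eq_norm_sq]
      simp
    have hib : ⟪g, b⟫ ≤ f xstar - f x := by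
      have := hconv x xstar
      rw [← hg, ← hbb, real_inner_comm] at this
      linarith
    have hle : h * (⟪g, b⟫ / n) ≤ h * ((f xstar - f x) / n) := by
      gcongr
    have hfin : C + h * ((f xstar - f x) / n) + (L₁ * h ^ 2 / 2) * (‖g‖ ^ 2 / n)
        = (1 - h / n) * (f x - f xstar) + L₁ * h ^ 2 / (2 * n) * ‖g‖ ^ 2
          + L₁ * μ ^ 2 / 2 := by
      rw [hC]; field_simp; ring
    rw [hval] at hmono
    linarith
  · rw [integral_undef hF]
    exact hRHS
end

section
/- Let f be differentiable, strongly convex with parameter m, and satisfy the quadratic upper bound with constant L₁. Let (x_k) be generated by Random Pursuit with absolute line search accuracy μ from initial point x₀. Then for all N ≥ 0: E[f(x_N) − f(x*)] ≤ (1 − m/(L₁ n))^N (f(x₀) − f(x*)) + L₁² n μ²/(2m). -/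
open MeasureTheory ProbabilityTheory
open scoped RealInnerProductSpace

lemma rp_aux_c_zero (c K : ℝ) (hK : 0 ≤ K) (h : ∀ s : ℝ, 0 ≤ s * c + K * s ^ 2) : c = 0 := by
  rcases eq_or_lt_of_le hK with hK0 | hKpos
  · have h1 := h 1
    have h2 := h (-1)
    rw [← hK0] at h1 h2
    nlinarith
  · have h2 := h (-(c / (2 * K)))
    have hexp : -(c / (2 * K)) * c + K * (-(c / (2 * K))) ^ 2 = -(c ^ 2 / (4 * K)) := by
      field_simp
      ring
    rw [hexp] at h2
    have hc2 : c ^ 2 / (4 * K) ≤ 0 := by linarith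
    have hc2' : c ^ 2 ≤ 0 := by
      by_contra hpos
      push_neg at hpos
      exact absurd hc2 (not_le.mpr (div_pos hpos (by linarith)))
    have hcz : c ^ 2 = 0 := le_antisymm hc2' (sq_nonneg c)
    exact pow_eq_zero_iff (n := 2) (by norm_num) |>.mp hcz

lemma rp_sphere_moment (n : ℕ) (hn : 0 < n)
    (μs : Measure (EuclideanSpace ℝ (Fin n))) [IsProbabilityMeasure μs]
    (hsphere : ∀ᵐ u ∂μs, ‖u‖ = 1)
    (hinv : ∀ e : EuclideanSpace ℝ (Fin n) ≃ₗᵢ[ℝ] EuclideanSpace ℝ (Fin n), μs.map e = μs)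
    (v : EuclideanSpace ℝ (Fin n)) :
    ∫ u, ⟪v, u⟫ ^ 2 ∂μs = ‖v‖ ^ 2 / n := by
  have hcont : ∀ w : EuclideanSpace ℝ (Fin n),
      Continuous fun u : EuclideanSpace ℝ (Fin n) => ⟪w, u⟫ ^ 2 :=
    fun w => (continuous_const.inner continuous_id).pow 2
  have hint : ∀ w : EuclideanSpace ℝ (Fin n),
      Integrable (fun u => ⟪w, u⟫ ^ 2) μs := by
    intro w
    refine Integrable.mono' (integrable_const (‖w‖ ^ 2)) (hcont w).aestronglyMeasurable ?_
    filter_upwards [hsphere] with u hu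
    have h1 : |⟪w, u⟫| ≤ ‖w‖ * ‖u‖ := abs_real_inner_le_norm w u
    rw [Real.norm_eq_abs, abs_of_nonneg (sq_nonneg _), ← sq_abs]
    calc |⟪w, u⟫| ^ 2 ≤ (‖w‖ * ‖u‖) ^ 2 := by
          exact pow_le_pow_left₀ (abs_nonneg _) h1 2
      _ = ‖w‖ ^ 2 := by rw [hu]; ring
  -- invariance under isometries
  have hinv2 : ∀ (e : EuclideanSpace ℝ (Fin n) ≃ₗᵢ[ℝ] EuclideanSpace ℝ (Fin n))
      (w : EuclideanSpace ℝ (Fin n)),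
      ∫ u, ⟪w, u⟫ ^ 2 ∂μs = ∫ u, ⟪e.symm w, u⟫ ^ 2 ∂μs := by
    intro e w
    conv_lhs => rw [← hinv e]
    rw [integral_map e.continuous.measurable.aemeasurable (hcont w).aestronglyMeasurable]
    congr 1
    ext u
    have h : ⟪w, e u⟫ = ⟪e.symm w, u⟫ := by
      rw [← LinearIsometryEquiv.inner_map_map e.symm, e.symm_apply_apply]
    rw [h]
  -- equal for unit vectors
  have hunit : ∀ w w' : EuclideanSpace ℝ (Fin n), ‖w‖ = 1 → ‖w'‖ = 1 →
      ∫ u, ⟪w, u⟫ ^ 2 ∂μs = ∫ u, ⟪w', u⟫ ^ 2 ∂μs := by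
    intro w w' hw hw'
    have hnorm : ‖w‖ = ‖w'‖ := by rw [hw, hw']
    let e := Submodule.reflection (ℝ ∙ (w - w'))ᗮ
    have he : e w = w' := Submodule.reflection_sub hnorm
    have hiv := hinv2 e w
    rw [hiv]
    congr 1
    ext u
    have hsymm : e.symm w = w' := by
      show (Submodule.reflection (ℝ ∙ (w - w'))ᗮ).symm w = w'
      rw [Submodule.reflection_symm]
      exact he
    rw [hsymm]
  have hsingle_norm : ∀ i : Fin n, ‖EuclideanSpace.single i (1:ℝ)‖ = 1 := by
    intro i; rw [EuclideanSpace.norm_single]; norm_num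
  set i0 : Fin n := ⟨0, hn⟩
  set r := ∫ u, ⟪EuclideanSpace.single i0 (1:ℝ), u⟫ ^ 2 ∂μs with hr
  have hsum : (n : ℝ) * r = 1 := by
    have h1 : ∑ i : Fin n, (∫ u, ⟪EuclideanSpace.single i (1:ℝ), u⟫ ^ 2 ∂μs) = (n : ℝ) * r := by
      calc ∑ i : Fin n, (∫ u, ⟪EuclideanSpace.single i (1:ℝ), u⟫ ^ 2 ∂μs)
          = ∑ _i : Fin n, r :=
            Finset.sum_congr rfl (fun i _ => hunit _ _ (hsingle_norm i) (hsingle_norm i0))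
        _ = (n : ℝ) * r := by simp [Finset.sum_const, nsmul_eq_mul]
    have h2 : ∑ i : Fin n, (∫ u, ⟪EuclideanSpace.single i (1:ℝ), u⟫ ^ 2 ∂μs)
        = ∫ u, ∑ i : Fin n, ⟪EuclideanSpace.single i (1:ℝ), u⟫ ^ 2 ∂μs :=
      (integral_finset_sum _ (fun i _ => hint _)).symm
    have h3 : ∫ u, ∑ i : Fin n, ⟪EuclideanSpace.single i (1:ℝ), u⟫ ^ 2 ∂μs = 1 := by
      have hae : ∀ᵐ u ∂μs, ∑ i : Fin n, ⟪EuclideanSpace.single i (1:ℝ), u⟫ ^ 2 = 1 := by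
        filter_upwards [hsphere] with u hu
        have hinner : ∀ i : Fin n, ⟪EuclideanSpace.single i (1:ℝ), u⟫ = u i := by
          intro i; rw [EuclideanSpace.inner_single_left]; simp
        simp_rw [hinner]
        have h4 : ⟪u, u⟫ = ∑ i, u i * u i := by
          rw [PiLp.inner_apply]; simp [RCLike.inner_apply, sq]
        have h5 : ⟪u, u⟫ = 1 := by
          rw [real_inner_self_eq_norm_sq, hu]; norm_num
        rw [← h5, h4]
        exact Finset.sum_congr rfl (fun i _ => (sq (u i)).symm ▸ (pow_two (u i)))
      rw [integral_congr_ae hae, integral_const]; simp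
    rw [← h1, h2, h3]
  have hn' : (n : ℝ) ≠ 0 := Nat.cast_ne_zero.mpr hn.ne'
  rcases eq_or_ne v 0 with rfl | hv
  · simp
  · have hnv : ‖v‖ ≠ 0 := norm_ne_zero_iff.mpr hv
    have hw : ‖(‖v‖⁻¹ • v)‖ = 1 := by
      rw [norm_smul, norm_inv, norm_norm, inv_mul_cancel₀ hnv]
    have hv_eq : v = ‖v‖ • (‖v‖⁻¹ • v) := by
      rw [smul_smul, mul_inv_cancel₀ hnv, one_smul]
    calc ∫ u, ⟪v, u⟫ ^ 2 ∂μs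
        = ∫ u, ‖v‖ ^ 2 * ⟪‖v‖⁻¹ • v, u⟫ ^ 2 ∂μs := by
          congr 1; ext u
          conv_lhs => rw [hv_eq]
          rw [real_inner_smul_left]; ring
      _ = ‖v‖ ^ 2 * ∫ u, ⟪‖v‖⁻¹ • v, u⟫ ^ 2 ∂μs := integral_const_mul _ _
      _ = ‖v‖ ^ 2 * r := by rw [hunit _ _ hw (hsingle_norm i0)]
      _ = ‖v‖ ^ 2 / n := by
          have hrn : r = 1 / n := by field_simp at hsum ⊢; linarith
          rw [hrn]; ring

section RPAux

variable {E : Type*} [NormedAddCommGroup E] [InnerProductSpace ℝ E]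

lemma rp_quad_key (f : E → ℝ) (f' : E → E) (c : ℝ) (hc : 0 < c)
    (h : ∀ x y : E, f y - f x - ⟪f' x, y - x⟫ ≤ c / 2 * ‖y - x‖ ^ 2) (x : E) :
    f (x - (1 / c) • f' x) ≤ f x - ‖f' x‖ ^ 2 / (2 * c) := by
  have h1 := h x (x - (1 / c) • f' x)
  have hy : x - (1 / c) • f' x - x = -((1 / c) • f' x) := by abel
  rw [hy] at h1
  have h2 : ⟪f' x, -((1 / c) • f' x)⟫ = -((1 / c) * ‖f' x‖ ^ 2) := by
    rw [inner_neg_right, real_inner_smul_right, real_inner_self_eq_norm_sq]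
  have h3 : ‖-((1 / c) • f' x)‖ ^ 2 = (1 / c) ^ 2 * ‖f' x‖ ^ 2 := by
    rw [norm_neg, norm_smul, mul_pow, Real.norm_eq_abs, sq_abs]
  rw [h2, h3] at h1
  have hc' : c ≠ 0 := hc.ne'
  have e1 : c / 2 * ((1 / c) ^ 2 * ‖f' x‖ ^ 2) = ‖f' x‖ ^ 2 / (2 * c) := by
    field_simp
  rw [e1] at h1
  have e2 : (1 / c) * ‖f' x‖ ^ 2 = 2 * (‖f' x‖ ^ 2 / (2 * c)) := by field_simp
  linarith [e2 ▸ h1]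

lemma rp_grad_upper (f : E → ℝ) (f' : E → E) (L₁ : ℝ) (hL : 0 < L₁)
    (hquad : ∀ x y, f y - f x - ⟪f' x, y - x⟫ ≤ L₁ / 2 * ‖y - x‖ ^ 2)
    (xstar : E) (hmin : ∀ y, f xstar ≤ f y) (x : E) :
    ‖f' x‖ ^ 2 ≤ 2 * L₁ * (f x - f xstar) := by
  have h1 := rp_quad_key f f' L₁ hL hquad x
  have h2 := hmin (x - (1 / L₁) • f' x)
  have hL' : L₁ ≠ 0 := hL.ne'
  have h3 : ‖f' x‖ ^ 2 / (2 * L₁) ≤ f x - f xstar := by linarith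
  calc ‖f' x‖ ^ 2 = 2 * L₁ * (‖f' x‖ ^ 2 / (2 * L₁)) := by field_simp
    _ ≤ 2 * L₁ * (f x - f xstar) := by
        apply mul_le_mul_of_nonneg_left h3 (by linarith)

lemma rp_grad_lower (f : E → ℝ) (f' : E → E) (m : ℝ) (hm : 0 < m)
    (hsc : ∀ x y, m / 2 * ‖y - x‖ ^ 2 ≤ f y - f x - ⟪f' x, y - x⟫)
    (xstar : E) (x : E) :
    2 * m * (f x - f xstar) ≤ ‖f' x‖ ^ 2 := by
  have h1 := hsc x xstar
  have hcs : -(‖f' x‖ * ‖xstar - x‖) ≤ ⟪f' x, xstar - x⟫ :=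
    neg_le_of_abs_le (abs_real_inner_le_norm _ _)
  nlinarith [sq_nonneg (m * ‖xstar - x‖ - ‖f' x‖), hm, h1, hcs, sq_nonneg ‖xstar - x‖]

lemma rp_step_pointwise (f : E → ℝ) (f' : E → E) (L₁ μ : ℝ) (hL : 0 < L₁)
    (hquad : ∀ x y, f y - f x - ⟪f' x, y - x⟫ ≤ L₁ / 2 * ‖y - x‖ ^ 2)
    (x u : E) (hu : ‖u‖ = 1) (hs ht : ℝ)
    (hls : ∀ t : ℝ, f (x + hs • u) ≤ f (x + t • u))
    (happ : |ht - hs| ≤ μ) :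
    f (x + ht • u) ≤ f x - ⟪f' x, u⟫ ^ 2 / (2 * L₁) + L₁ / 2 * μ ^ 2 := by
  set y := x + hs • u with hy
  have hmerge : ∀ s : ℝ, y + s • u = x + (hs + s) • u := by
    intro s; rw [hy, add_smul, ← add_assoc]
  have hnorm : ∀ s : ℝ, ‖s • u‖ ^ 2 = s ^ 2 := by
    intro s; rw [norm_smul, hu, mul_one, Real.norm_eq_abs, sq_abs]
  -- directional derivative at line-search optimum vanishes
  have hz : ⟪f' y, u⟫ = 0 := by
    apply rp_aux_c_zero _ (L₁ / 2) (by linarith)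
    intro s
    have h1 : f y ≤ f (y + s • u) := by rw [hmerge s]; exact hls (hs + s)
    have h2 := hquad y (y + s • u)
    rw [add_sub_cancel_left, real_inner_smul_right, hnorm s] at h2
    linarith
  -- the approximate step loses at most L₁/2 μ²
  have hstep1 : f (x + ht • u) ≤ f y + L₁ / 2 * μ ^ 2 := by
    have hxy : x + ht • u = y + (ht - hs) • u := by
      rw [hmerge (ht - hs)]; ring_nf
    have h2 := hquad y (y + (ht - hs) • u)
    rw [add_sub_cancel_left, real_inner_smul_right, hz, mul_zero, hnorm] at h2
    have hd2 : (ht - hs) ^ 2 ≤ μ ^ 2 := by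
      rw [← sq_abs]; exact pow_le_pow_left₀ (abs_nonneg _) happ 2
    rw [hxy]
    nlinarith
  -- the exact line search does at least as well as the explicit step
  have hstep2 : f y ≤ f x - ⟪f' x, u⟫ ^ 2 / (2 * L₁) := by
    set c := ⟪f' x, u⟫ with hc
    have h6 : f y ≤ f (x + (-(c / L₁)) • u) := hls _
    have h7 := hquad x (x + (-(c / L₁)) • u)
    rw [add_sub_cancel_left, real_inner_smul_right, hnorm] at h7
    have he : (-(c / L₁)) * c + L₁ / 2 * (-(c / L₁)) ^ 2 = -(c ^ 2 / (2 * L₁)) := by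
      field_simp; ring
    rw [← hc] at h7
    nlinarith [h7, he, h6]
  linarith

end RPAux

/-- Linear convergence of Random Pursuit with absolute line search accuracy μ on strongly
convex functions: E[f(x_N) − f(x*)] ≤ (1 − m/(L₁n))^N (f(x₀) − f(x*)) + L₁²nμ²/(2m). -/
theorem rp_convergence_strongly_convex (n : ℕ) (hn : 0 < n)
    (f : EuclideanSpace ℝ (Fin n) → ℝ)
    (f' : EuclideanSpace ℝ (Fin n) → EuclideanSpace ℝ (Fin n))
    (L₁ m : ℝ) (hm : 0 < m) (hmL : m ≤ L₁)
    (hdiff : ∀ x, HasGradientAt f (f' x) x)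
    (hsc : ∀ x y, m / 2 * ‖y - x‖ ^ 2 ≤ f y - f x - ⟪f' x, y - x⟫)
    (hquad : ∀ x y, f y - f x - ⟪f' x, y - x⟫ ≤ L₁ / 2 * ‖y - x‖ ^ 2)
    (xstar : EuclideanSpace ℝ (Fin n)) (hmin : ∀ y, f xstar ≤ f y)
    (μs : Measure (EuclideanSpace ℝ (Fin n))) [IsProbabilityMeasure μs]
    (hsphere : ∀ᵐ u ∂μs, ‖u‖ = 1)
    (hinv : ∀ e : EuclideanSpace ℝ (Fin n) ≃ₗᵢ[ℝ] EuclideanSpace ℝ (Fin n), μs.map e = μs)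
    (Ω : Type*) [MeasurableSpace Ω] (P : Measure Ω) [IsProbabilityMeasure P]
    (x u : ℕ → Ω → EuclideanSpace ℝ (Fin n)) (hstar htilde : ℕ → Ω → ℝ)
    (μ : ℝ) (hμ : 0 ≤ μ)
    (x₀ : EuclideanSpace ℝ (Fin n)) (hx0 : ∀ ω, x 0 ω = x₀)
    (hxsucc : ∀ k ω, x (k + 1) ω = x k ω + htilde k ω • u k ω)
    (hls : ∀ k ω, ∀ t : ℝ, f (x k ω + hstar k ω • u k ω) ≤ f (x k ω + t • u k ω))
    (happ : ∀ k ω, |htilde k ω - hstar k ω| ≤ μ)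
    (hmeasx : ∀ k, Measurable (x k)) (hmeasu : ∀ k, Measurable (u k))
    (hlaw : ∀ k, P.map (u k) = μs)
    (hindep : ∀ k, IndepFun (x k) (u k) P)
    (N : ℕ) :
    ∫ ω, (f (x N ω) - f xstar) ∂P ≤
      (1 - m / (L₁ * n)) ^ N * (f x₀ - f xstar) + L₁ ^ 2 * n * μ ^ 2 / (2 * m) := by
  classical
  have hL : 0 < L₁ := lt_of_lt_of_le hm hmL
  have hn' : (0:ℝ) < n := Nat.cast_pos.mpr hn
  -- continuity and measurability of f and f'
  have hfc : Continuous f := by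
    rw [continuous_iff_continuousAt]
    exact fun z => (hdiff z).hasFDerivAt.continuousAt
  have hf'meas : Measurable f' := by
    have hf'eq : f' = fun z =>
        (InnerProductSpace.toDual ℝ (EuclideanSpace ℝ (Fin n))).symm (fderiv ℝ f z) := by
      funext z
      have h1 := (hdiff z).hasFDerivAt
      rw [h1.fderiv]
      simp
    rw [hf'eq]
    exact (LinearIsometryEquiv.continuous _).measurable.comp (measurable_fderiv ℝ f)
  -- the suboptimality process
  have hDnn : ∀ (k : ℕ) (ω : Ω), 0 ≤ f (x k ω) - f xstar := fun k ω => sub_nonneg.mpr (hmin _)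
  have hDmeas : ∀ k, Measurable (fun ω => f (x k ω) - f xstar) := fun k => (hfc.measurable.comp (hmeasx k)).sub_const _
  have hu1 : ∀ k, ∀ᵐ ω ∂P, ‖u k ω‖ = 1 := by
    intro k
    have h := hlaw k ▸ hsphere
    exact ae_of_ae_map (hmeasu k).aemeasurable h
  -- pointwise one-step inequality
  have hstep_ae : ∀ k, ∀ᵐ ω ∂P,
      (f (x (k+1) ω) - f xstar) ≤ (f (x k ω) - f xstar) - ⟪f' (x k ω), u k ω⟫ ^ 2 / (2 * L₁) + L₁ / 2 * μ ^ 2 := by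
    intro k
    filter_upwards [hu1 k] with ω hω
    have h := rp_step_pointwise f f' L₁ μ hL hquad (x k ω) (u k ω) hω (hstar k ω) (htilde k ω)
      (fun t => hls k ω t) (happ k ω)
    rw [hxsucc k ω]
    linarith
  -- a.e. boundedness of D k
  obtain ⟨B, hB⟩ : ∃ B : ℕ → ℝ, ∀ k : ℕ,
      B k = (f x₀ - f xstar) + k * (L₁ / 2 * μ ^ 2) := ⟨_, fun _ => rfl⟩
  have hDbd : ∀ k, ∀ᵐ ω ∂P, (f (x k ω) - f xstar) ≤ B k := by
    intro k
    induction k with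
    | zero =>
      filter_upwards with ω
      rw [hx0 ω, hB]
      simp
    | succ k ih =>
      filter_upwards [ih, hstep_ae k] with ω h1 h2
      have hq : (0:ℝ) ≤ ⟪f' (x k ω), u k ω⟫ ^ 2 / (2 * L₁) :=
        div_nonneg (sq_nonneg _) (by linarith)
      have hBk : B (k+1) = B k + L₁ / 2 * μ ^ 2 := by
        rw [hB, hB]; push_cast; ring
      rw [hBk]
      exact le_trans h2 (add_le_add (le_trans (sub_le_self _ hq) h1) le_rfl)
  have hDint : ∀ k, Integrable (fun ω => f (x k ω) - f xstar) P := by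
    intro k
    refine Integrable.mono' (integrable_const (B k)) (hDmeas k).aestronglyMeasurable ?_
    filter_upwards [hDbd k] with ω hω
    rw [Real.norm_eq_abs, abs_of_nonneg (hDnn k ω)]
    exact hω
  -- gradient bounds
  have hgradub : ∀ z, ‖f' z‖ ^ 2 ≤ 2 * L₁ * (f z - f xstar) :=
    rp_grad_upper f f' L₁ hL hquad xstar hmin
  have hgradlb : ∀ z, 2 * m * (f z - f xstar) ≤ ‖f' z‖ ^ 2 :=
    rp_grad_lower f f' m hm hsc xstar
  have hNmeas : ∀ k, Measurable (fun ω => ‖f' (x k ω)‖ ^ 2) := fun k =>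
    ((hf'meas.comp (hmeasx k)).norm.pow_const 2)
  have hNbd : ∀ k, ∀ᵐ ω ∂P, ‖f' (x k ω)‖ ^ 2 ≤ 2 * L₁ * B k := by
    intro k
    filter_upwards [hDbd k] with ω hω
    calc ‖f' (x k ω)‖ ^ 2 ≤ 2 * L₁ * (f (x k ω) - f xstar) := hgradub _
      _ ≤ 2 * L₁ * B k := by
          apply mul_le_mul_of_nonneg_left _ (by linarith)
          exact hω
  have hNint : ∀ k, Integrable (fun ω => ‖f' (x k ω)‖ ^ 2) P := by
    intro k
    refine Integrable.mono' (integrable_const (2 * L₁ * B k)) (hNmeas k).aestronglyMeasurable ?_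
    filter_upwards [hNbd k] with ω hω
    rw [Real.norm_eq_abs, abs_of_nonneg (sq_nonneg _)]
    exact hω
  have hGmeas : ∀ k, Measurable (fun ω => ⟪f' (x k ω), u k ω⟫ ^ 2) := fun k =>
    ((hf'meas.comp (hmeasx k)).inner (hmeasu k)).pow_const 2
  have hGbd : ∀ k, ∀ᵐ ω ∂P, ⟪f' (x k ω), u k ω⟫ ^ 2 ≤ 2 * L₁ * B k := by
    intro k
    filter_upwards [hu1 k, hNbd k] with ω h1 h2
    calc ⟪f' (x k ω), u k ω⟫ ^ 2 = |⟪f' (x k ω), u k ω⟫| ^ 2 := (sq_abs _).symm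
      _ ≤ (‖f' (x k ω)‖ * ‖u k ω‖) ^ 2 :=
          pow_le_pow_left₀ (abs_nonneg _) (abs_real_inner_le_norm _ _) 2
      _ = ‖f' (x k ω)‖ ^ 2 := by rw [h1]; ring
      _ ≤ 2 * L₁ * B k := h2
  have hGint : ∀ k, Integrable (fun ω => ⟪f' (x k ω), u k ω⟫ ^ 2) P := by
    intro k
    refine Integrable.mono' (integrable_const (2 * L₁ * B k)) (hGmeas k).aestronglyMeasurable ?_
    filter_upwards [hGbd k] with ω hω
    rw [Real.norm_eq_abs, abs_of_nonneg (sq_nonneg _)]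
    exact hω
  -- key expectation identity via independence and the sphere moment
  have hkey : ∀ k, ∫ ω, ⟪f' (x k ω), u k ω⟫ ^ 2 ∂P
      = (∫ ω, ‖f' (x k ω)‖ ^ 2 ∂P) / n := by
    intro k
    have hpair : P.map (fun ω => (x k ω, u k ω)) = (P.map (x k)).prod μs := by
      rw [← hlaw k]
      exact (indepFun_iff_map_prod_eq_prod_map_map (hmeasx k).aemeasurable
        (hmeasu k).aemeasurable).mp (hindep k)
    haveI : IsProbabilityMeasure (P.map (x k)) :=
      Measure.isProbabilityMeasure_map (hmeasx k).aemeasurable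
    have hFmeas : Measurable (fun p : EuclideanSpace ℝ (Fin n) × EuclideanSpace ℝ (Fin n) =>
        ⟪f' p.1, p.2⟫ ^ 2) :=
      ((hf'meas.comp measurable_fst).inner measurable_snd).pow_const 2
    have hmapx_ae : ∀ᵐ z ∂(P.map (x k)), ‖f' z‖ ^ 2 ≤ 2 * L₁ * B k := by
      rw [ae_map_iff (hmeasx k).aemeasurable
        (measurableSet_le (hf'meas.norm.pow_const 2) measurable_const)]
      exact hNbd k
    have h1 : ∀ᵐ p ∂((P.map (x k)).prod μs), ‖f' p.1‖ ^ 2 ≤ 2 * L₁ * B k := by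
      have hmfst : ((P.map (x k)).prod μs).map Prod.fst = P.map (x k) := by
        rw [Measure.map_fst_prod]; simp
      exact ae_of_ae_map measurable_fst.aemeasurable (hmfst ▸ hmapx_ae)
    have h2 : ∀ᵐ p ∂((P.map (x k)).prod μs), ‖p.2‖ = 1 := by
      have hmsnd : ((P.map (x k)).prod μs).map Prod.snd = μs := by
        rw [Measure.map_snd_prod]; simp
      exact ae_of_ae_map measurable_snd.aemeasurable (hmsnd ▸ hsphere)
    have hFint : Integrable (fun p : EuclideanSpace ℝ (Fin n) × EuclideanSpace ℝ (Fin n) =>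
        ⟪f' p.1, p.2⟫ ^ 2) ((P.map (x k)).prod μs) := by
      refine Integrable.mono' (integrable_const (2 * L₁ * B k)) hFmeas.aestronglyMeasurable ?_
      filter_upwards [h1, h2] with p hp1 hp2
      rw [Real.norm_eq_abs, abs_of_nonneg (sq_nonneg _), ← sq_abs]
      calc |⟪f' p.1, p.2⟫| ^ 2 ≤ (‖f' p.1‖ * ‖p.2‖) ^ 2 :=
            pow_le_pow_left₀ (abs_nonneg _) (abs_real_inner_le_norm _ _) 2
        _ = ‖f' p.1‖ ^ 2 := by rw [hp2]; ring
        _ ≤ 2 * L₁ * B k := hp1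
    calc ∫ ω, ⟪f' (x k ω), u k ω⟫ ^ 2 ∂P
        = ∫ p, ⟪f' p.1, p.2⟫ ^ 2 ∂((P.map (x k)).prod μs) := by
          rw [← hpair, integral_map ((hmeasx k).aemeasurable.prodMk (hmeasu k).aemeasurable)
            hFmeas.aestronglyMeasurable]
      _ = ∫ z, (∫ v, ⟪f' z, v⟫ ^ 2 ∂μs) ∂(P.map (x k)) := integral_prod _ hFint
      _ = ∫ z, ‖f' z‖ ^ 2 / n ∂(P.map (x k)) := by
          congr 1; ext z; exact rp_sphere_moment n hn μs hsphere hinv (f' z)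
      _ = ∫ ω, ‖f' (x k ω)‖ ^ 2 / n ∂P := by
          rw [integral_map (hmeasx k).aemeasurable
            ((hf'meas.norm.pow_const 2).div_const _).aestronglyMeasurable]
      _ = (∫ ω, ‖f' (x k ω)‖ ^ 2 ∂P) / n := integral_div _ _
  -- lower bound on the gradient-norm integral
  have hlow : ∀ k, 2 * m * ∫ ω, (f (x k ω) - f xstar) ∂P ≤ ∫ ω, ‖f' (x k ω)‖ ^ 2 ∂P := by
    intro k
    rw [← integral_const_mul]
    exact integral_mono ((hDint k).const_mul _) (hNint k) (fun ω => hgradlb (x k ω))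
  -- expectation recursion
  have hrec : ∀ k, ∫ ω, (f (x (k+1) ω) - f xstar) ∂P ≤
      (1 - m / (L₁ * n)) * ∫ ω, (f (x k ω) - f xstar) ∂P + L₁ / 2 * μ ^ 2 := by
    intro k
    have hint1 : Integrable (fun ω => (f (x k ω) - f xstar) - ⟪f' (x k ω), u k ω⟫ ^ 2 / (2 * L₁)) P :=
      (hDint k).sub ((hGint k).div_const _)
    have h1 : ∫ ω, (f (x (k+1) ω) - f xstar) ∂P ≤
        ∫ ω, ((f (x k ω) - f xstar) - ⟪f' (x k ω), u k ω⟫ ^ 2 / (2 * L₁) + L₁ / 2 * μ ^ 2) ∂P :=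
      integral_mono_ae (hDint (k+1)) (hint1.add (integrable_const _)) (hstep_ae k)
    rw [integral_add hint1 (integrable_const _),
      integral_sub (hDint k) ((hGint k).div_const _), integral_div, integral_const,
      probReal_univ] at h1
    simp only [ENNReal.toReal_one, smul_eq_mul, one_mul] at h1
    have h2 := hkey k
    have h3 := hlow k
    have hSnn : 0 ≤ ∫ ω, (f (x k ω) - f xstar) ∂P := integral_nonneg (hDnn k)
    have h4 : m / (L₁ * ↑n) * ∫ ω, (f (x k ω) - f xstar) ∂P
        ≤ (∫ ω, ⟪f' (x k ω), u k ω⟫ ^ 2 ∂P) / (2 * L₁) := by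
      rw [h2, div_div, le_div_iff₀ (by positivity : (0:ℝ) < ↑n * (2 * L₁))]
      calc m / (L₁ * ↑n) * (∫ ω, (f (x k ω) - f xstar) ∂P) * (↑n * (2 * L₁))
          = 2 * m * ∫ ω, (f (x k ω) - f xstar) ∂P := by field_simp
        _ ≤ ∫ ω, ‖f' (x k ω)‖ ^ 2 ∂P := h3
    linarith
  -- final induction
  have hD0 : ∫ ω, (f (x 0 ω) - f xstar) ∂P = f x₀ - f xstar := by
    have : (fun ω => (f (x 0 ω) - f xstar)) = fun _ => f x₀ - f xstar := by
      funext ω; rw [hx0 ω]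
    rw [this, integral_const, probReal_univ]
    simp
  obtain ⟨a, ha⟩ : ∃ a : ℝ, a = 1 - m / (L₁ * ↑n) := ⟨_, rfl⟩
  have ha0 : 0 ≤ a := by
    rw [ha]
    have hfrac : m / (L₁ * ↑n) ≤ 1 := by
      rw [div_le_one (by positivity)]
      calc m ≤ L₁ := hmL
        _ = L₁ * 1 := by ring
        _ ≤ L₁ * ↑n := by
            apply mul_le_mul_of_nonneg_left _ (by linarith)
            exact_mod_cast Nat.one_le_iff_ne_zero.mpr hn.ne'
    linarith
  obtain ⟨R, hR⟩ : ∃ R : ℝ, R = L₁ ^ 2 * ↑n * μ ^ 2 / (2 * m) := ⟨_, rfl⟩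
  have hR0 : 0 ≤ R := by rw [hR]; positivity
  have haR : a * R + L₁ / 2 * μ ^ 2 = R := by
    rw [ha, hR]
    field_simp
    ring
  have hrec' : ∀ k, ∫ ω, (f (x (k+1) ω) - f xstar) ∂P ≤
      a * ∫ ω, (f (x k ω) - f xstar) ∂P + L₁ / 2 * μ ^ 2 := by
    intro k
    rw [ha]
    exact hrec k
  have hmain : ∀ M : ℕ, ∫ ω, (f (x M ω) - f xstar) ∂P ≤ a ^ M * (f x₀ - f xstar) + R := by
    intro M
    induction M with
    | zero =>
      rw [hD0, pow_zero, one_mul]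
      linarith
    | succ k ih =>
      calc ∫ ω, (f (x (k+1) ω) - f xstar) ∂P
          ≤ a * ∫ ω, (f (x k ω) - f xstar) ∂P + L₁ / 2 * μ ^ 2 := hrec' k
        _ ≤ a * (a ^ k * (f x₀ - f xstar) + R) + L₁ / 2 * μ ^ 2 := by
            exact add_le_add (mul_le_mul_of_nonneg_left ih ha0) le_rfl
        _ = a ^ (k+1) * (f x₀ - f xstar) + (a * R + L₁ / 2 * μ ^ 2) := by ring
        _ = a ^ (k+1) * (f x₀ - f xstar) + R := by rw [haR]
  have hfin := hmain N
  rw [ha, hR] at hfin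
  exact hfin
end

section
/- Let f be differentiable, convex, with quadratic upper bound constant L₁, and suppose f has a unique minimizer x* satisfying f(x) − f(x*) ≥ (m/2)‖x − x*‖² for all x (local strong convexity at the optimum). Then Random Pursuit with absolute line search accuracy μ satisfies E[f(x_N) − f(x*)] ≤ (1 − m/(4 L₁ n))^N (f(x₀) − f(x*)) + 2 L₁² n μ²/m. -/
open MeasureTheory ProbabilityTheory
open scoped RealInnerProductSpace


lemma unit_moment {n : ℕ} (hn : 0 < n)
    (μs : Measure (EuclideanSpace ℝ (Fin n))) [IsProbabilityMeasure μs]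
    (hsphere : ∀ᵐ u ∂μs, ‖u‖ = 1)
    (hinv : ∀ e : EuclideanSpace ℝ (Fin n) ≃ₗᵢ[ℝ] EuclideanSpace ℝ (Fin n), μs.map e = μs)
    (v : EuclideanSpace ℝ (Fin n)) (hv : ‖v‖ = 1) :
    ∫ w, ⟪v, w⟫ ^ 2 ∂μs = 1 / n := by
  classical
  have hE : True := trivial
  have i0 : Fin n := ⟨0, hn⟩
  -- orthonormal basis containing v
  have hcard : Module.finrank ℝ (EuclideanSpace ℝ (Fin n)) = Fintype.card (Fin n) := by
    simp [finrank_euclideanSpace]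
  have horth : Orthonormal ℝ (({i0} : Set (Fin n)).restrict (fun _ => v)) := by
    constructor
    · intro i; simpa [Set.restrict] using hv
    · intro i j hij
      exact absurd (Subtype.ext (by
        have hi := i.2; have hj := j.2
        simp only [Set.mem_singleton_iff] at hi hj
        rw [hi, hj])) hij
  obtain ⟨b, hb⟩ := horth.exists_orthonormalBasis_extension_of_card_eq hcard
  have hbv : b i0 = v := hb i0 rfl
  -- integrability
  have hmeas : ∀ g : EuclideanSpace ℝ (Fin n), AEStronglyMeasurable (fun w => ⟪g, w⟫ ^ 2) μs := by
    intro g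
    exact ((continuous_const.inner continuous_id).pow 2).aestronglyMeasurable
  have hint : ∀ g : EuclideanSpace ℝ (Fin n), ‖g‖ = 1 → Integrable (fun w => ⟪g, w⟫ ^ 2) μs := by
    intro g hg
    refine (integrable_const (1:ℝ)).mono' (hmeas g) ?_
    filter_upwards [hsphere] with w hw
    have := abs_real_inner_le_norm g w
    rw [hg, hw] at this
    calc ‖⟪g, w⟫ ^ 2‖ = |⟪g, w⟫| ^ 2 := by rw [Real.norm_eq_abs, abs_pow, sq_abs, ← sq_abs]
    _ ≤ 1 ^ 2 := by nlinarith [abs_nonneg (⟪g, w⟫ : ℝ)]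
    _ = 1 := one_pow 2
  -- each coordinate has the same second moment
  have hsame : ∀ i : Fin n, ∫ w, ⟪b i, w⟫ ^ 2 ∂μs = ∫ w, ⟪b i0, w⟫ ^ 2 ∂μs := by
    intro i
    set σ : Fin n ≃ Fin n := Equiv.swap i i0 with hσ
    set e : EuclideanSpace ℝ (Fin n) ≃ₗᵢ[ℝ] EuclideanSpace ℝ (Fin n) :=
      b.repr.trans ((LinearIsometryEquiv.piLpCongrLeft 2 ℝ ℝ σ).trans b.repr.symm) with he
    have key : ∀ w : EuclideanSpace ℝ (Fin n), ⟪b i, e w⟫ = ⟪b i0, w⟫ := by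
      intro w
      have h1 : ⟪b i, e w⟫ = b.repr (e w) i := (b.repr_apply_apply (e w) i).symm
      have h2 : b.repr (e w) = LinearIsometryEquiv.piLpCongrLeft 2 ℝ ℝ σ (b.repr w) := by
        simp [he]
      rw [h1, h2, LinearIsometryEquiv.piLpCongrLeft_apply]
      have : (Equiv.piCongrLeft' (fun _ : Fin n => ℝ) σ (b.repr w)) i = b.repr w (σ.symm i) := rfl
      rw [this]
      have : σ.symm i = i0 := by simp [hσ, Equiv.swap_apply_left]
      rw [this, b.repr_apply_apply]
    calc ∫ w, ⟪b i, w⟫ ^ 2 ∂μs = ∫ w, ⟪b i, w⟫ ^ 2 ∂(μs.map e) := by rw [hinv e]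
    _ = ∫ w, ⟪b i, e w⟫ ^ 2 ∂μs := by
        rw [integral_map (e.continuous.measurable.aemeasurable) ((hmeas (b i)).mono_ac ?_)]
        · rw [hinv e]
    _ = ∫ w, ⟪b i0, w⟫ ^ 2 ∂μs := by simp_rw [key]
  -- sum over basis
  have hsum : ∑ i : Fin n, ∫ w, ⟪b i, w⟫ ^ 2 ∂μs = 1 := by
    rw [← integral_finset_sum _ (fun i _ => hint (b i) (b.orthonormal.1 i))]
    have : ∀ᵐ w ∂μs, ∑ i : Fin n, ⟪b i, w⟫ ^ 2 = 1 := by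
      filter_upwards [hsphere] with w hw
      have := b.sum_inner_mul_inner w w
      have h2 : ∑ i : Fin n, ⟪b i, w⟫ ^ 2 = ⟪w, w⟫ := by
        rw [← this]
        congr 1; ext i
        rw [real_inner_comm w (b i)]; ring
      rw [h2, real_inner_self_eq_norm_sq, hw]; norm_num
    rw [integral_congr_ae this]
    simp
  have hall : ∀ i : Fin n, ∫ w, ⟪b i, w⟫ ^ 2 ∂μs = ∫ w, ⟪b i0, w⟫ ^ 2 ∂μs := hsame
  rw [Finset.sum_congr rfl (fun i _ => hall i), Finset.sum_const, Finset.card_univ,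
    Fintype.card_fin, nsmul_eq_mul] at hsum
  have : ∫ w, ⟪b i0, w⟫ ^ 2 ∂μs = 1 / n := by
    field_simp at hsum ⊢
    linarith [hsum]
  rw [← hbv]; exact this

lemma gen_moment {n : ℕ} (hn : 0 < n)
    (μs : Measure (EuclideanSpace ℝ (Fin n))) [IsProbabilityMeasure μs]
    (hsphere : ∀ᵐ u ∂μs, ‖u‖ = 1)
    (hinv : ∀ e : EuclideanSpace ℝ (Fin n) ≃ₗᵢ[ℝ] EuclideanSpace ℝ (Fin n), μs.map e = μs)
    (g : EuclideanSpace ℝ (Fin n)) :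
    ∫ w, ⟪g, w⟫ ^ 2 ∂μs = ‖g‖ ^ 2 / n := by
  rcases eq_or_ne g 0 with rfl | hg
  · simp
  · have hng : ‖g‖ ≠ 0 := norm_ne_zero_iff.mpr hg
    set v := ‖g‖⁻¹ • g with hvdef
    have hv : ‖v‖ = 1 := by
      rw [hvdef, norm_smul, norm_inv, norm_norm, inv_mul_cancel₀ hng]
    have key := unit_moment hn μs hsphere hinv v hv
    have expand : ∀ w, (⟪g, w⟫ : ℝ) ^ 2 = ‖g‖^2 * ⟪v, w⟫^2 := by
      intro w
      rw [hvdef, real_inner_smul_left]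
      field_simp
    calc ∫ w, ⟪g, w⟫ ^ 2 ∂μs = ∫ w, ‖g‖^2 * ⟪v, w⟫ ^ 2 ∂μs := by simp_rw [expand]
    _ = ‖g‖^2 * ∫ w, ⟪v, w⟫ ^ 2 ∂μs := integral_const_mul _ _
    _ = ‖g‖^2 / n := by rw [key]; field_simp


variable {n : ℕ}

lemma grad_lower (f : EuclideanSpace ℝ (Fin n) → ℝ)
    (f' : EuclideanSpace ℝ (Fin n) → EuclideanSpace ℝ (Fin n)) (m : ℝ) (hm : 0 < m)
    (hconv : ∀ x y, f x + ⟪f' x, y - x⟫ ≤ f y)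
    (xstar : EuclideanSpace ℝ (Fin n)) (hmin : ∀ y, f xstar ≤ f y)
    (hloc : ∀ y, m / 2 * ‖y - xstar‖ ^ 2 ≤ f y - f xstar)
    (x : EuclideanSpace ℝ (Fin n)) :
    m / 2 * (f x - f xstar) ≤ ‖f' x‖ ^ 2 := by
  have h1 : f x - f xstar ≤ ⟪f' x, x - xstar⟫ := by
    have h := hconv x xstar
    have : ⟪f' x, xstar - x⟫ = -⟪f' x, x - xstar⟫ := by
      rw [← inner_neg_right]; congr 1; abel
    linarith [h, this.symm ▸ h]
  have h2 : ⟪f' x, x - xstar⟫ ≤ ‖f' x‖ * ‖x - xstar‖ := real_inner_le_norm _ _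
  have h3 := hloc x
  have h4 : (0:ℝ) ≤ f x - f xstar := by linarith [hmin x]
  have h5 : (0:ℝ) ≤ ‖f' x‖ := norm_nonneg _
  have h6 : (0:ℝ) ≤ ‖x - xstar‖ := norm_nonneg _
  have key : m/2 * (f x - f xstar)^2 ≤ ‖f' x‖^2 * (f x - f xstar) := by
    have hsq : (f x - f xstar)^2 ≤ (‖f' x‖ * ‖x - xstar‖)^2 := by
      have := mul_self_le_mul_self h4 (h1.trans h2)
      nlinarith [this]
    nlinarith [mul_le_mul_of_nonneg_left h3 (sq_nonneg ‖f' x‖), hsq, hm.le]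
  rcases eq_or_lt_of_le h4 with h|h
  · rw [← h, mul_zero]; positivity
  · nlinarith [key, h, hm]

lemma grad_upper (f : EuclideanSpace ℝ (Fin n) → ℝ)
    (f' : EuclideanSpace ℝ (Fin n) → EuclideanSpace ℝ (Fin n)) (L₁ : ℝ) (hL : 0 < L₁)
    (hquad : ∀ x y, f y - f x - ⟪f' x, y - x⟫ ≤ L₁ / 2 * ‖y - x‖ ^ 2)
    (xstar : EuclideanSpace ℝ (Fin n)) (hmin : ∀ y, f xstar ≤ f y)
    (x : EuclideanSpace ℝ (Fin n)) :
    ‖f' x‖ ^ 2 ≤ 2 * L₁ * (f x - f xstar) := by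
  have h := hquad x (x - (1/L₁) • f' x)
  have hyx : x - (1/L₁) • f' x - x = -((1/L₁) • f' x) := by abel
  rw [hyx] at h
  rw [inner_neg_right, real_inner_smul_right, real_inner_self_eq_norm_sq] at h
  rw [norm_neg, norm_smul, Real.norm_eq_abs, abs_of_pos (by positivity : (0:ℝ) < 1/L₁)] at h
  have h2 := hmin (x - (1/L₁) • f' x)
  have hL' : L₁ ≠ 0 := ne_of_gt hL
  rw [mul_pow] at h
  have e1 : L₁ / 2 * ((1/L₁)^2 * ‖f' x‖^2) = ‖f' x‖^2 / (2*L₁) := by field_simp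
  rw [e1] at h
  have e2 : 1/L₁ * ‖f' x‖^2 = 2 * (‖f' x‖^2/(2*L₁)) := by field_simp
  have h3 : ‖f' x‖^2/(2*L₁) ≤ f x - f xstar := by linarith [h, h2, e2]
  have := (div_le_iff₀ (by positivity : (0:ℝ) < 2*L₁)).mp h3
  nlinarith [this]

lemma step_bound (f : EuclideanSpace ℝ (Fin n) → ℝ)
    (f' : EuclideanSpace ℝ (Fin n) → EuclideanSpace ℝ (Fin n)) (L₁ : ℝ) (hL : 0 < L₁)
    (hquad : ∀ x y, f y - f x - ⟪f' x, y - x⟫ ≤ L₁ / 2 * ‖y - x‖ ^ 2)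
    (x u : EuclideanSpace ℝ (Fin n)) (hu : ‖u‖ = 1) (hs ht μ : ℝ)
    (hls : ∀ t : ℝ, f (x + hs • u) ≤ f (x + t • u)) (happ : |ht - hs| ≤ μ) :
    f (x + ht • u) ≤ f x - ⟪f' x, u⟫ ^ 2 / (2 * L₁) + L₁ / 2 * μ ^ 2 := by
  set p := x + hs • u with hp
  set c : ℝ := ⟪f' p, u⟫ with hc
  have hnorm : ∀ t : ℝ, ‖t • u‖ ^ 2 = t ^ 2 := by
    intro t; rw [norm_smul, hu, mul_one, Real.norm_eq_abs, sq_abs]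
  have hL' : L₁ ≠ 0 := ne_of_gt hL
  have hc0 : c = 0 := by
    set t : ℝ := -(c/L₁) with htt
    have key := hquad p (p + t • u)
    have e1 : p + t • u - p = t • u := by abel
    rw [e1, real_inner_smul_right, ← hc, hnorm] at key
    have e2 : p + t • u = x + (hs + t) • u := by rw [hp, add_smul]; abel
    have hge : f p ≤ f (p + t • u) := by rw [e2]; exact hls _
    have hct : c = -L₁ * t := by rw [htt, neg_mul_neg, mul_div_cancel₀ _ hL']
    have htc : t * c = -(L₁ * t^2) := by rw [hct]; ring
    clear_value t c
    have ht2 : t ^ 2 ≤ 0 := by nlinarith [key, hge, htc, hL]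
    have ht0 : t = 0 := pow_eq_zero_iff two_ne_zero |>.mp (le_antisymm ht2 (sq_nonneg t))
    rw [hct, ht0, mul_zero]
  have step1 : f (x + ht • u) ≤ f p + L₁ / 2 * μ ^ 2 := by
    have key := hquad p (x + ht • u)
    have e1 : x + ht • u - p = (ht - hs) • u := by rw [hp, sub_smul]; abel
    rw [e1, real_inner_smul_right, ← hc, hc0, mul_zero, hnorm] at key
    have : (ht - hs)^2 ≤ μ^2 := by
      rw [← sq_abs]; exact pow_le_pow_left₀ (abs_nonneg _) happ 2
    nlinarith [key, this, mul_le_mul_of_nonneg_left this (by positivity : (0:ℝ) ≤ L₁/2)]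
  have step2 : f p ≤ f x - ⟪f' x, u⟫ ^ 2 / (2 * L₁) := by
    set g : ℝ := ⟪f' x, u⟫ with hg
    have key := hquad x (x + (-(g/L₁)) • u)
    have e1 : x + (-(g/L₁)) • u - x = (-(g/L₁)) • u := by abel
    rw [e1, real_inner_smul_right, hnorm] at key
    have hle := hls (-(g/L₁))
    have e3 : -(g/L₁) * g = -(g^2/L₁) := by ring
    have e4 : L₁/2 * (-(g/L₁))^2 = g^2/(2*L₁) := by field_simp
    have e5 : g^2/L₁ = 2*(g^2/(2*L₁)) := by field_simp
    linarith [key, hle, e3, e4, e5]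
  linarith


lemma grad_measurable {n : ℕ} (f : EuclideanSpace ℝ (Fin n) → ℝ)
    (f' : EuclideanSpace ℝ (Fin n) → EuclideanSpace ℝ (Fin n))
    (hdiff : ∀ x, HasGradientAt f (f' x) x) : Measurable f' := by
  have hdf : Differentiable ℝ f := fun x => (hdiff x).hasFDerivAt.differentiableAt
  have hfc : Continuous f := hdf.continuous
  have hcoord : ∀ w, Measurable fun x => (⟪f' x, w⟫ : ℝ) := by
    intro w
    have htend : ∀ x, Filter.Tendsto (fun j : ℕ => (f (x + (1/(j+1:ℝ)) • w) - f x) * (j+1))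
        Filter.atTop (nhds ⟪f' x, w⟫) := by
      intro x
      have hD : HasDerivAt (fun t : ℝ => f (x + t • w)) ⟪f' x, w⟫ 0 := by
        have h1 : HasDerivAt (fun t : ℝ => x + t • w) w 0 := by
          simpa using ((hasDerivAt_id (0:ℝ)).smul_const w).const_add x
        have h2 := (hdiff (x + (0:ℝ) • w)).hasFDerivAt.comp_hasDerivAt 0 h1
        simpa [Function.comp_def] using h2
      rw [hasDerivAt_iff_tendsto_slope] at hD
      have hseq : Filter.Tendsto (fun j : ℕ => (1:ℝ)/(j+1)) Filter.atTop (nhdsWithin 0 {(0:ℝ)}ᶜ) := by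
        rw [tendsto_nhdsWithin_iff]
        refine ⟨tendsto_one_div_add_atTop_nhds_zero_nat, Filter.Eventually.of_forall fun j => ?_⟩
        simp only [Set.mem_compl_iff, Set.mem_singleton_iff]
        positivity
      refine (hD.comp hseq).congr fun j => ?_
      have hj : (0:ℝ) < 1/(j+1) := by positivity
      show slope (fun t : ℝ => f (x + t • w)) 0 (1/(j+1:ℝ)) = _
      rw [slope_def_field]
      rw [zero_smul, add_zero, sub_zero, div_div_eq_mul_div]
      simp
    exact measurable_of_tendsto_metrizable
      (fun j => (((hfc.comp (continuous_id.add continuous_const)).sub hfc).mul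
        continuous_const).measurable)
      (tendsto_pi_nhds.mpr htend)
  have : Measurable fun x => (fun i => f' x i : Fin n → ℝ) := by
    rw [measurable_pi_iff]
    intro i
    have : (fun x => f' x i) = fun x => (⟪f' x, EuclideanSpace.single i (1:ℝ)⟫ : ℝ) := by
      ext x
      rw [EuclideanSpace.inner_single_right]
      simp
    rw [this]; exact hcoord _
  exact (WithLp.measurable_toLp 2 _).comp this


/-- Linear convergence of Random Pursuit under local strong convexity at the optimum:
E[f(x_N) − f(x*)] ≤ (1 − m/(4L₁n))^N (f(x₀) − f(x*)) + 2L₁²nμ²/m. -/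
theorem rp_convergence_locally_strongly_convex (n : ℕ) (hn : 0 < n)
    (f : EuclideanSpace ℝ (Fin n) → ℝ)
    (f' : EuclideanSpace ℝ (Fin n) → EuclideanSpace ℝ (Fin n))
    (L₁ m : ℝ) (hm : 0 < m) (hmL : m ≤ L₁)
    (hdiff : ∀ x, HasGradientAt f (f' x) x)
    (hconv : ∀ x y, f x + ⟪f' x, y - x⟫ ≤ f y)
    (hquad : ∀ x y, f y - f x - ⟪f' x, y - x⟫ ≤ L₁ / 2 * ‖y - x‖ ^ 2)
    (xstar : EuclideanSpace ℝ (Fin n)) (hmin : ∀ y, f xstar ≤ f y)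
    (huniq : ∀ y, f y = f xstar → y = xstar)
    (hloc : ∀ y, m / 2 * ‖y - xstar‖ ^ 2 ≤ f y - f xstar)
    (μs : Measure (EuclideanSpace ℝ (Fin n))) [IsProbabilityMeasure μs]
    (hsphere : ∀ᵐ u ∂μs, ‖u‖ = 1)
    (hinv : ∀ e : EuclideanSpace ℝ (Fin n) ≃ₗᵢ[ℝ] EuclideanSpace ℝ (Fin n), μs.map e = μs)
    (Ω : Type*) [MeasurableSpace Ω] (P : Measure Ω) [IsProbabilityMeasure P]
    (x u : ℕ → Ω → EuclideanSpace ℝ (Fin n)) (hstar htilde : ℕ → Ω → ℝ)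
    (μ : ℝ) (hμ : 0 ≤ μ)
    (x₀ : EuclideanSpace ℝ (Fin n)) (hx0 : ∀ ω, x 0 ω = x₀)
    (hxsucc : ∀ k ω, x (k + 1) ω = x k ω + htilde k ω • u k ω)
    (hls : ∀ k ω, ∀ t : ℝ, f (x k ω + hstar k ω • u k ω) ≤ f (x k ω + t • u k ω))
    (happ : ∀ k ω, |htilde k ω - hstar k ω| ≤ μ)
    (hmeasx : ∀ k, Measurable (x k)) (hmeasu : ∀ k, Measurable (u k))
    (hlaw : ∀ k, P.map (u k) = μs)
    (hindep : ∀ k, IndepFun (x k) (u k) P)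
    (N : ℕ) :
    ∫ ω, (f (x N ω) - f xstar) ∂P ≤
      (1 - m / (4 * L₁ * n)) ^ N * (f x₀ - f xstar) + 2 * L₁ ^ 2 * n * μ ^ 2 / m := by
  classical
  have hL : 0 < L₁ := lt_of_lt_of_le hm hmL
  have hn' : (0:ℝ) < n := Nat.cast_pos.mpr hn
  have hdf : Differentiable ℝ f := fun x => (hdiff x).hasFDerivAt.differentiableAt
  have hfc : Continuous f := hdf.continuous
  have hmf' : Measurable f' := grad_measurable f f' hdiff
  set c : ℝ := m / (4 * L₁ * n) with hcdef
  set b : ℝ := L₁ / 2 * μ ^ 2 with hbdef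
  have hcpos : 0 < c := by positivity
  have hbnonneg : 0 ≤ b := by positivity
  have hcle : c ≤ 1 := by
    rw [hcdef, div_le_one (by positivity)]
    calc m ≤ L₁ := hmL
    _ = L₁ * 1 := (mul_one _).symm
    _ ≤ 4 * L₁ * n := by
      have h1n : (1:ℝ) ≤ n := Nat.one_le_cast.mpr hn
      nlinarith [mul_nonneg hL.le (by linarith : (0:ℝ) ≤ 4 * (n:ℝ) - 1)]
  -- u k is a.e. on the sphere
  have hu1 : ∀ k, ∀ᵐ ω ∂P, ‖u k ω‖ = 1 := by
    intro k
    have : ∀ᵐ v ∂(P.map (u k)), ‖v‖ = 1 := by rw [hlaw k]; exact hsphere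
    exact (ae_map_iff (hmeasu k).aemeasurable
      (measurableSet_eq_fun continuous_norm.measurable measurable_const)).mp this
  -- pointwise step bound (a.e.)
  have hstep : ∀ k, ∀ᵐ ω ∂P,
      f (x (k+1) ω) - f xstar ≤ (f (x k ω) - f xstar)
        - ⟪f' (x k ω), u k ω⟫ ^ 2 / (2 * L₁) + b := by
    intro k
    filter_upwards [hu1 k] with ω hω
    have := step_bound f f' L₁ hL hquad (x k ω) (u k ω) hω
      (hstar k ω) (htilde k ω) μ (hls k ω) (happ k ω)
    rw [hxsucc k ω]
    linarith
  -- uniform bounds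
  set B : ℕ → ℝ := fun k => (f x₀ - f xstar) + k * b with hBdef
  have hB0 : 0 ≤ f x₀ - f xstar := by linarith [hmin x₀]
  have hBnonneg : ∀ k, 0 ≤ B k := by
    intro k; rw [hBdef]; positivity
  have hBmono : ∀ k, B k + b = B (k+1) := by
    intro k; simp only [hBdef]; push_cast; ring
  have hbound : ∀ k, ∀ᵐ ω ∂P, f (x k ω) - f xstar ≤ B k := by
    intro k
    induction k with
    | zero => filter_upwards with ω; rw [hx0 ω]; simp [hBdef]
    | succ k ih =>
      filter_upwards [hstep k, ih] with ω h1 h2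
      have hq : 0 ≤ ⟪f' (x k ω), u k ω⟫ ^ 2 / (2 * L₁) := by positivity
      rw [← hBmono k]
      linarith
  -- integrabilities
  have hnonneg : ∀ k ω, 0 ≤ f (x k ω) - f xstar := fun k ω => by linarith [hmin (x k ω)]
  have I1 : ∀ k, Integrable (fun ω => f (x k ω) - f xstar) P := by
    intro k
    refine (integrable_const (B k)).mono'
      (((hfc.measurable.comp (hmeasx k)).sub measurable_const).aestronglyMeasurable) ?_
    filter_upwards [hbound k] with ω hω
    rw [Real.norm_eq_abs, abs_of_nonneg (hnonneg k ω)]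
    simpa using hω
  have hgb : ∀ (x' : EuclideanSpace ℝ (Fin n)), ‖f' x'‖^2 ≤ 2 * L₁ * (f x' - f xstar) :=
    grad_upper f f' L₁ hL hquad xstar hmin
  have I3 : ∀ k, Integrable (fun ω => ‖f' (x k ω)‖ ^ 2) P := by
    intro k
    refine (integrable_const (2 * L₁ * B k)).mono'
      (((hmf'.comp (hmeasx k)).norm.pow measurable_const).aestronglyMeasurable) ?_
    filter_upwards [hbound k] with ω hω
    rw [Real.norm_eq_abs, abs_of_nonneg (by positivity)]
    calc ‖f' (x k ω)‖^2 ≤ 2 * L₁ * (f (x k ω) - f xstar) := hgb _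
    _ ≤ 2 * L₁ * B k := by nlinarith [hω, hL]
  have I2 : ∀ k, Integrable (fun ω => ⟪f' (x k ω), u k ω⟫ ^ 2) P := by
    intro k
    refine (integrable_const (2 * L₁ * B k)).mono'
      (((hmf'.comp (hmeasx k)).inner (hmeasu k)).pow measurable_const).aestronglyMeasurable ?_
    filter_upwards [hbound k, hu1 k] with ω h1 h2
    rw [Real.norm_eq_abs, abs_of_nonneg (sq_nonneg _)]
    have := abs_real_inner_le_norm (f' (x k ω)) (u k ω)
    rw [h2, mul_one] at this
    calc ⟪f' (x k ω), u k ω⟫^2 ≤ ‖f' (x k ω)‖^2 := by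
          rw [← sq_abs]; exact pow_le_pow_left₀ (abs_nonneg _) this 2
    _ ≤ 2 * L₁ * (f (x k ω) - f xstar) := hgb _
    _ ≤ 2 * L₁ * B k := by nlinarith [h1, hL]
  -- the moment identity via independence
  have hmom : ∀ k, ∫ ω, ⟪f' (x k ω), u k ω⟫ ^ 2 ∂P
      = ∫ ω, ‖f' (x k ω)‖ ^ 2 / n ∂P := by
    intro k
    set ν : Measure (EuclideanSpace ℝ (Fin n)) := P.map (x k) with hν
    have hνprob : IsProbabilityMeasure ν := Measure.isProbabilityMeasure_map (hmeasx k).aemeasurable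
    set F : EuclideanSpace ℝ (Fin n) × EuclideanSpace ℝ (Fin n) → ℝ :=
      fun p => ⟪f' p.1, p.2⟫ ^ 2 with hF
    have hFmeas : Measurable F :=
      ((hmf'.comp measurable_fst).inner measurable_snd).pow measurable_const
    have hjoint : P.map (fun ω => (x k ω, u k ω)) = ν.prod μs := by
      rw [hν, ← hlaw k]
      exact (indepFun_iff_map_prod_eq_prod_map_map (hmeasx k).aemeasurable
        (hmeasu k).aemeasurable).mp (hindep k)
    have hνb : ∀ᵐ x' ∂ν, ‖f' x'‖^2 ≤ 2 * L₁ * B k := by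
      rw [hν]
      rw [ae_map_iff (hmeasx k).aemeasurable
        (measurableSet_le ((hmf'.norm.pow measurable_const)) measurable_const)]
      filter_upwards [hbound k] with ω hω
      calc ‖f' (x k ω)‖^2 ≤ 2 * L₁ * (f (x k ω) - f xstar) := hgb _
      _ ≤ 2 * L₁ * B k := by nlinarith [hω, hL]
    have hFint : Integrable F (ν.prod μs) := by
      refine (integrable_const (2 * L₁ * B k)).mono' hFmeas.aestronglyMeasurable ?_
      have hae : ∀ᵐ p ∂(ν.prod μs), ‖f' p.1‖^2 ≤ 2 * L₁ * B k ∧ ‖p.2‖ = 1 := by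
        rw [Measure.ae_prod_iff_ae_ae]
        · filter_upwards [hνb] with x' hx'
          filter_upwards [hsphere] with w hw
          exact ⟨hx', hw⟩
        · exact ((measurableSet_le ((hmf'.norm.pow measurable_const).comp measurable_fst)
            measurable_const).inter
            (measurableSet_eq_fun (continuous_norm.measurable.comp measurable_snd)
              measurable_const))
      filter_upwards [hae] with p hp
      rw [Real.norm_eq_abs, abs_of_nonneg (sq_nonneg _)]
      have := abs_real_inner_le_norm (f' p.1) p.2
      rw [hp.2, mul_one] at this
      have h1 : (⟪f' p.1, p.2⟫:ℝ)^2 ≤ ‖f' p.1‖^2 := by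
        rw [← sq_abs (⟪f' p.1, p.2⟫:ℝ)]
        exact pow_le_pow_left₀ (abs_nonneg _) this 2
      calc F p = (⟪f' p.1, p.2⟫:ℝ)^2 := rfl
      _ ≤ ‖f' p.1‖^2 := h1
      _ ≤ 2 * L₁ * B k := hp.1
    calc ∫ ω, ⟪f' (x k ω), u k ω⟫ ^ 2 ∂P
        = ∫ ω, F (x k ω, u k ω) ∂P := rfl
    _ = ∫ p, F p ∂(P.map (fun ω => (x k ω, u k ω))) :=
        (integral_map ((hmeasx k).prodMk (hmeasu k)).aemeasurable
          hFmeas.aestronglyMeasurable).symm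
    _ = ∫ p, F p ∂(ν.prod μs) := by rw [hjoint]
    _ = ∫ x', ∫ w, F (x', w) ∂μs ∂ν := integral_prod F hFint
    _ = ∫ x', ‖f' x'‖^2 / n ∂ν := by
        refine integral_congr_ae (Filter.Eventually.of_forall fun x' => ?_)
        exact gen_moment hn μs hsphere hinv (f' x')
    _ = ∫ ω, ‖f' (x k ω)‖ ^ 2 / n ∂P := by
        rw [hν, integral_map (hmeasx k).aemeasurable
          ((hmf'.norm.pow measurable_const).div_const _).aestronglyMeasurable]
  -- single-step recursion in expectation
  set a : ℕ → ℝ := fun k => ∫ ω, (f (x k ω) - f xstar) ∂P with hadef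
  have hrec : ∀ k, a (k+1) ≤ (1 - c) * a k + b := by
    intro k
    have hle : a (k+1) ≤ a k - (∫ ω, ⟪f' (x k ω), u k ω⟫ ^ 2 ∂P) / (2 * L₁) + b := by
      have hint : Integrable (fun ω => (f (x k ω) - f xstar)
          - ⟪f' (x k ω), u k ω⟫ ^ 2 / (2 * L₁) + b) P :=
        (((I1 k).sub ((I2 k).div_const _)).add (integrable_const b))
      have := integral_mono_ae (I1 (k+1)) hint (hstep k)
      rw [hadef]
      calc ∫ ω, (f (x (k+1) ω) - f xstar) ∂P
          ≤ ∫ ω, ((f (x k ω) - f xstar) - ⟪f' (x k ω), u k ω⟫ ^ 2 / (2 * L₁) + b) ∂P := this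
      _ = a k - (∫ ω, ⟪f' (x k ω), u k ω⟫ ^ 2 ∂P) / (2 * L₁) + b := by
          have Isub : Integrable (fun ω => (f (x k ω) - f xstar)
              - ⟪f' (x k ω), u k ω⟫ ^ 2 / (2 * L₁)) P := (I1 k).sub ((I2 k).div_const _)
          rw [integral_add Isub (integrable_const b),
            integral_sub (I1 k) ((I2 k).div_const _), integral_const, integral_div]
          simp [measure_univ, hadef]
    have hlow : c * a k ≤ (∫ ω, ⟪f' (x k ω), u k ω⟫ ^ 2 ∂P) / (2 * L₁) := by
      rw [hmom k]
      have hml : ∀ᵐ ω ∂P, c * (2 * L₁) * (f (x k ω) - f xstar) ≤ ‖f' (x k ω)‖ ^ 2 / n := by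
        filter_upwards with ω
        have hg := grad_lower f f' m hm hconv xstar hmin hloc (x k ω)
        have hce : c * (2 * L₁) * (f (x k ω) - f xstar) * n
            = m / 2 * (f (x k ω) - f xstar) := by
          rw [hcdef]; field_simp; ring
        rw [le_div_iff₀ hn', hce]
        exact hg
      have := integral_mono_ae ((I1 k).const_mul (c * (2 * L₁)))
        ((I3 k).div_const _) hml
      rw [integral_const_mul] at this
      rw [le_div_iff₀ (by positivity : (0:ℝ) < 2 * L₁)]
      calc c * a k * (2 * L₁) = c * (2 * L₁) * a k := by ring
      _ ≤ ∫ ω, ‖f' (x k ω)‖ ^ 2 / n ∂P := this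
    linarith [hle, hlow]
  -- initial value
  have ha0 : a 0 = f x₀ - f xstar := by
    have he : (fun ω => f (x 0 ω) - f xstar) = fun _ => f x₀ - f xstar := by
      funext ω; rw [hx0]
    show ∫ ω, (f (x 0 ω) - f xstar) ∂P = _
    rw [he, integral_const, probReal_univ]
    simp
  -- iterate
  have hbc : b / c = 2 * L₁ ^ 2 * n * μ ^ 2 / m := by
    rw [hbdef, hcdef, div_div_eq_mul_div]
    rw [div_mul_eq_mul_div, mul_comm]
    field_simp
    ring
  have haN : a N = ∫ ω, (f (x N ω) - f xstar) ∂P := rfl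
  clear_value a c b
  have hiter : ∀ K, a K ≤ (1 - c) ^ K * a 0 + b / c := by
    intro K
    induction K with
    | zero =>
      have hb0 : 0 ≤ b / c := div_nonneg hbnonneg hcpos.le
      simp only [pow_zero, one_mul]
      linarith
    | succ K ih =>
      have h1c : 0 ≤ 1 - c := by linarith
      calc a (K+1) ≤ (1 - c) * a K + b := hrec K
      _ ≤ (1 - c) * ((1 - c) ^ K * a 0 + b / c) + b := by
          have := mul_le_mul_of_nonneg_left ih h1c
          linarith
      _ = (1 - c) ^ (K+1) * a 0 + ((1 - c) * (b / c) + b) := by ring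
      _ = (1 - c) ^ (K+1) * a 0 + b / c := by
          have hcb : (1 - c) * (b / c) + b = b / c := by
            field_simp [hcpos.ne']
            ring
          rw [hcb]
  have hfinal := hiter N
  rw [ha0, hbc] at hfinal
  rw [← haN]
  exact hfinal
end
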